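/- Let V be a finite set and let A be a symmetric V × V matrix over GF(2) (a graph with loops). If φ and φ' are two sequences of operations applicable to A, each operation being either a local complementation *u at a looped vertex or a pivot [uv] at an edge between two distinct loop-free vertices, and sup(φ) = sup(φ'), then Aφ = Aφ'. -/

import Mathlib

set_option linter.unusedSectionVars false
set_option maxHeartbeats 1000000
open Matrix

variable {V : Type*} [Fintype V] [DecidableEq V]

/-- Principal submatrix with rows and columns indexed by `S`. -/
def psub (A : Matrix V V (ZMod 2)) (S : Finset V) : Matrix S S (ZMod 2) :=
  A.submatrix (fun i : S => (i : V)) (fun j : S => (j : V))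

/-- Local complementation at a looped vertex `u` of a graph with loops,
identified with its symmetric adjacency matrix over GF(2):
`(A*u)_{xy} = A_{xy} + A_{xu}·A_{uy}` for `x, y ≠ u`, entries in row/column `u` unchanged. -/
def matLC (A : Matrix V V (ZMod 2)) (u : V) : Matrix V V (ZMod 2) :=
  fun x y => if x = u ∨ y = u then A x y else A x y + A x u * A u y

/-- `s_A(x,y)` : `x = y` or `A_{xy} = 1`. -/
def matNbr (A : Matrix V V (ZMod 2)) (x y : V) : Prop := x = y ∨ A x y = 1

/-- Pivot `A[uv]` on an edge `{u,v}` between two loop-free vertices of a graph with loops: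
same diagonal as `A`, and for `x ≠ y`,
`(A[uv])_{xy} = A_{xy} XOR (s_A(x,u) ∧ s_A(y,v)) XOR (s_A(x,v) ∧ s_A(y,u))`. -/
noncomputable def matPivotEdge (A : Matrix V V (ZMod 2)) (u v : V) : Matrix V V (ZMod 2) := by
  classical
  exact fun x y =>
    if x = y then A x y
    else A x y + (if matNbr A x u ∧ matNbr A y v then 1 else 0)
               + (if matNbr A x v ∧ matNbr A y u then 1 else 0)

/-- Apply a sequence of mixed operations (left to right): `Sum.inl u` is the local
complementation `*u`, `Sum.inr (u,v)` is the pivot `[uv]`. -/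
noncomputable def applyOps (A : Matrix V V (ZMod 2)) : List (V ⊕ V × V) → Matrix V V (ZMod 2)
  | [] => A
  | (Sum.inl u) :: φ => applyOps (matLC A u) φ
  | (Sum.inr p) :: φ => applyOps (matPivotEdge A p.1 p.2) φ

/-- A mixed sequence is applicable when each operation's defining condition holds in the
matrix obtained by applying all preceding operations: `*u` needs a loop at `u`, and `[uv]`
needs `u ≠ v`, both loop-free, and `A_{uv} = 1`. -/
def OpsApplicable (A : Matrix V V (ZMod 2)) : List (V ⊕ V × V) → Prop
  | [] => True
  | (Sum.inl u) :: φ => A u u = 1 ∧ OpsApplicable (matLC A u) φ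
  | (Sum.inr p) :: φ => p.1 ≠ p.2 ∧ A p.1 p.1 = 0 ∧ A p.2 p.2 = 0 ∧ A p.1 p.2 = 1 ∧
      OpsApplicable (matPivotEdge A p.1 p.2) φ

/-- The list of vertex occurrences of a mixed sequence: `*u` contributes one occurrence
of `u`, `[uv]` one occurrence each of `u` and `v`. -/
def opsVertices (φ : List (V ⊕ V × V)) : List V :=
  φ.flatMap fun o => match o with | Sum.inl u => [u] | Sum.inr p => [p.1, p.2]

/-- The support of a mixed sequence: vertices occurring an odd number of times. -/
def opsSupport (φ : List (V ⊕ V × V)) : Finset V :=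
  Finset.univ.filter fun x => Odd ((opsVertices φ).count x)

/-- two applicable mixed sequences of local complementations and pivots
with equal support yield the same graph with loops. -/
def rk1 (p q : V → ZMod 2) : Matrix V V (ZMod 2) := fun i j => p i * q j

def cvec (A : Matrix V V (ZMod 2)) (u : V) : V → ZMod 2 :=
  fun k => A k u + if k = u then 1 else 0

lemma h2 : ∀ a : ZMod 2, a + a = 0 := by decide
lemma zmod2cases : ∀ a : ZMod 2, a = 0 ∨ a = 1 := by decide

lemma matLC_eq (A : Matrix V V (ZMod 2)) (u : V) (hA : A.IsSymm) (huu : A u u = 1) :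
    matLC A u = A + rk1 (cvec A u) (cvec A u) := by
  have hdu : cvec A u u = 0 := by simp [cvec, huu]; decide
  ext x y
  simp only [matLC, Matrix.add_apply, rk1]
  split_ifs with h
  · rcases h with h | h <;> subst h <;> simp [hdu]
  · push_neg at h
    simp only [cvec, if_neg h.1, if_neg h.2, add_zero]
    rw [hA.apply u y]

lemma cvec_ind (A : Matrix V V (ZMod 2)) (u : V) (huu : A u u = 0) (x : V) :
    cvec A u x = if x = u ∨ A x u = 1 then 1 else 0 := by
  by_cases hx : x = u
  · subst hx; simp [cvec, huu]
  · rcases zmod2cases (A x u) with h | h <;> simp [cvec, hx, h]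

lemma matPivot_eq (A : Matrix V V (ZMod 2)) (u v : V)
    (huu : A u u = 0) (hvv : A v v = 0) :
    matPivotEdge A u v = A + rk1 (cvec A u) (cvec A v) + rk1 (cvec A v) (cvec A u) := by
  have h20 : (2 : ZMod 2) = 0 := rfl
  ext x y
  by_cases hxy : x = y
  · subst hxy
    have hd : matPivotEdge A u v x x = A x x := if_pos rfl
    rw [hd, Matrix.add_apply, Matrix.add_apply]
    show A x x = A x x + rk1 (cvec A u) (cvec A v) x x + rk1 (cvec A v) (cvec A u) x x
    simp only [rk1]
    linear_combination (-(cvec A u x * cvec A v x)) * h20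
  · simp only [matPivotEdge, if_neg hxy, Matrix.add_apply, rk1, matNbr,
      cvec_ind A u huu, cvec_ind A v hvv]
    by_cases h1 : x = u ∨ A x u = 1 <;> by_cases h2 : y = v ∨ A y v = 1 <;>
      by_cases h3 : x = v ∨ A x v = 1 <;> by_cases h4 : y = u ∨ A y u = 1 <;>
      simp only [h1, h2, h3, h4, and_self, and_true, true_and, and_false, false_and,
        if_true, if_false, mul_one, mul_zero, add_zero] <;>
      first
        | ring1
        | linear_combination h20
        | linear_combination -h20
        | (exfalso; tauto)

lemma isSymm_add3 (A : Matrix V V (ZMod 2)) (hA : A.IsSymm) (p q : V → ZMod 2) :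
    (A + rk1 p q + rk1 q p).IsSymm := by
  unfold Matrix.IsSymm
  ext i j
  simp only [Matrix.transpose_apply, Matrix.add_apply, rk1]
  rw [hA.apply i j]
  ring

lemma isSymm_add1 (A : Matrix V V (ZMod 2)) (hA : A.IsSymm) (p : V → ZMod 2) :
    (A + rk1 p p).IsSymm := by
  unfold Matrix.IsSymm
  ext i j
  simp only [Matrix.transpose_apply, Matrix.add_apply, rk1]
  rw [hA.apply i j]
  ring

def swv (S : Finset V) (x y : V → ZMod 2) : V → ZMod 2 := fun i => if i ∈ S then y i else x i

lemma swv_swv (S T : Finset V) (x y : V → ZMod 2) :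
    swv S (swv T x y) (swv T y x) = swv (symmDiff S T) x y := by
  funext i
  by_cases hS : i ∈ S <;> by_cases hT : i ∈ T <;>
    simp [swv, hS, hT, Finset.mem_symmDiff]

lemma swv_invol (S : Finset V) (x y : V → ZMod 2) :
    swv S (swv S x y) (swv S y x) = x := by
  rw [swv_swv, symmDiff_self]
  funext i; simp [swv]

lemma rk1_mulVec (p q x : V → ZMod 2) : (rk1 p q).mulVec x = fun i => p i * (q ⬝ᵥ x) := by
  funext i
  simp [rk1, Matrix.mulVec, dotProduct, Finset.mul_sum, mul_assoc]

lemma cvec_dot (A : Matrix V V (ZMod 2)) (hA : A.IsSymm) (u : V) (x : V → ZMod 2) :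
    cvec A u ⬝ᵥ x = A.mulVec x u + x u := by
  have hsym : ∀ k, A k u = A u k := fun k => (hA.apply u k)
  simp only [cvec, dotProduct, Matrix.mulVec, add_mul, Finset.sum_add_distrib, ite_mul,
    one_mul, zero_mul]
  rw [Finset.sum_ite_eq' Finset.univ u x]
  simp [hsym]

lemma swv_apply_mem {S : Finset V} {x y : V → ZMod 2} {i : V} (h : i ∈ S) :
    swv S x y i = y i := if_pos h

lemma swv_apply_not_mem {S : Finset V} {x y : V → ZMod 2} {i : V} (h : i ∉ S) :
    swv S x y i = x i := if_neg h

lemma lc_fwd (A : Matrix V V (ZMod 2)) (u : V) (hA : A.IsSymm) (huu : A u u = 1)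
    (x : V → ZMod 2) :
    A.mulVec (swv {u} x ((matLC A u).mulVec x)) = swv {u} ((matLC A u).mulVec x) x := by
  have h20 : (2 : ZMod 2) = 0 := rfl
  have hdu : cvec A u u = 0 := by simp only [cvec, huu, if_pos rfl]; decide
  have hy : (matLC A u).mulVec x = fun i => A.mulVec x i + cvec A u i * (cvec A u ⬝ᵥ x) := by
    rw [matLC_eq A u hA huu, Matrix.add_mulVec, rk1_mulVec]; rfl
  have htt : cvec A u ⬝ᵥ x = A.mulVec x u + x u := cvec_dot A hA u x
  have hyu : (matLC A u).mulVec x u = A.mulVec x u := by rw [hy]; simp [hdu]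
  have hx' : swv {u} x ((matLC A u).mulVec x) = x + Pi.single u (cvec A u ⬝ᵥ x) := by
    funext i
    simp only [Pi.add_apply]
    by_cases hi : i = u
    · rw [hi, swv_apply_mem (Finset.mem_singleton_self u), hyu, Pi.single_eq_same, htt]
      linear_combination (-(x u)) * h20
    · rw [swv_apply_not_mem (by simp [hi]), Pi.single_eq_of_ne hi, add_zero]
  rw [hx', Matrix.mulVec_add, Matrix.mulVec_single]
  funext i
  simp only [Pi.add_apply, Pi.smul_apply, Matrix.col_apply, op_smul_eq_mul]
  by_cases hi : i = u
  · rw [hi, swv_apply_mem (Finset.mem_singleton_self u), huu, one_mul, htt]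
    linear_combination (A.mulVec x u) * h20
  · rw [swv_apply_not_mem (by simp [hi]), hy]
    simp [cvec, hi]

lemma piv_fwd (A : Matrix V V (ZMod 2)) (u v : V) (hA : A.IsSymm) (hne : u ≠ v)
    (huu : A u u = 0) (hvv : A v v = 0) (huv : A u v = 1) (x : V → ZMod 2) :
    A.mulVec (swv {u,v} x ((matPivotEdge A u v).mulVec x))
      = swv {u,v} ((matPivotEdge A u v).mulVec x) x := by
  have h20 : (2 : ZMod 2) = 0 := rfl
  have hvu : A v u = 1 := by rw [hA.apply u v]; exact huv
  have hcu_u : cvec A u u = 1 := by simp [cvec, huu]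
  have hcv_u : cvec A v u = 1 := by simp [cvec, hne, huv]
  have hcu_v : cvec A u v = 1 := by
    have : v ≠ u := hne.symm
    simp [cvec, this, hvu]
  have hy : (matPivotEdge A u v).mulVec x
      = fun i => A.mulVec x i + cvec A u i * (cvec A v ⬝ᵥ x) + cvec A v i * (cvec A u ⬝ᵥ x) := by
    rw [matPivot_eq A u v huu hvv, Matrix.add_mulVec, Matrix.add_mulVec, rk1_mulVec, rk1_mulVec]
    rfl
  have hα : cvec A u ⬝ᵥ x = A.mulVec x u + x u := cvec_dot A hA u x
  have hβ : cvec A v ⬝ᵥ x = A.mulVec x v + x v := cvec_dot A hA v x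
  have hx' : swv {u,v} x ((matPivotEdge A u v).mulVec x)
      = x + Pi.single u (cvec A v ⬝ᵥ x) + Pi.single v (cvec A u ⬝ᵥ x) := by
    funext i
    simp only [Pi.add_apply]
    by_cases hiu : i = u
    · rw [hiu, swv_apply_mem (by simp), hy]
      simp only [hcu_u, hcv_u, one_mul, Pi.single_apply]
      rw [if_pos trivial, if_neg hne]
      linear_combination hα + (A.mulVec x u) * h20
    · by_cases hiv : i = v
      · rw [hiv, swv_apply_mem (by simp), hy]
        have hcv_v : cvec A v v = 1 := by simp [cvec, hvv]
        simp only [hcu_v, hcv_v, one_mul, Pi.single_apply]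
        rw [if_pos trivial, if_neg hne.symm]
        linear_combination hβ + (A.mulVec x v) * h20
      · rw [swv_apply_not_mem (by simp [hiu, hiv])]
        simp [Pi.single_apply, hiu, hiv]
  rw [hx', Matrix.mulVec_add, Matrix.mulVec_add, Matrix.mulVec_single, Matrix.mulVec_single]
  funext i
  simp only [Pi.add_apply, Pi.smul_apply, Matrix.col_apply, op_smul_eq_mul]
  by_cases hiu : i = u
  · rw [hiu, swv_apply_mem (by simp), huu, huv, zero_mul, one_mul, add_zero]
    linear_combination hα + (A.mulVec x u) * h20
  · by_cases hiv : i = v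
    · rw [hiv, swv_apply_mem (by simp), hvv, hvu, zero_mul, one_mul, add_zero]
      linear_combination hβ + (A.mulVec x v) * h20
    · rw [swv_apply_not_mem (by simp [hiu, hiv]), hy]
      simp [cvec, hiu, hiv]

lemma matLC_isSymm (A : Matrix V V (ZMod 2)) (u : V) (hA : A.IsSymm) (huu : A u u = 1) :
    (matLC A u).IsSymm := by
  rw [matLC_eq A u hA huu]; exact isSymm_add1 A hA (cvec A u)

lemma matLC_diag (A : Matrix V V (ZMod 2)) (u : V) : (matLC A u) u u = A u u := by
  simp [matLC]

lemma cvec_matLC (A : Matrix V V (ZMod 2)) (u : V) : cvec (matLC A u) u = cvec A u := by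
  funext k; simp [cvec, matLC]

lemma matLC_invol (A : Matrix V V (ZMod 2)) (u : V) (hA : A.IsSymm) (huu : A u u = 1) :
    matLC (matLC A u) u = A := by
  have h20 : (2 : ZMod 2) = 0 := rfl
  rw [matLC_eq (matLC A u) u (matLC_isSymm A u hA huu) (by rw [matLC_diag]; exact huu),
    cvec_matLC, matLC_eq A u hA huu]
  ext i j
  simp only [Matrix.add_apply, rk1]
  linear_combination (cvec A u i * cvec A u j) * h20

lemma matPiv_isSymm (A : Matrix V V (ZMod 2)) (u v : V) (hA : A.IsSymm)
    (huu : A u u = 0) (hvv : A v v = 0) : (matPivotEdge A u v).IsSymm := by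
  rw [matPivot_eq A u v huu hvv]; exact isSymm_add3 A hA _ _

lemma matPiv_diag (A : Matrix V V (ZMod 2)) (u v w : V) : matPivotEdge A u v w w = A w w :=
  if_pos rfl

lemma cvec_self_one (A : Matrix V V (ZMod 2)) (u : V) (huu : A u u = 0) : cvec A u u = 1 := by
  simp [cvec, huu]

lemma cvec_other_one (A : Matrix V V (ZMod 2)) (u v : V) (hne : u ≠ v) (huv : A u v = 1) :
    cvec A v u = 1 := by simp [cvec, hne, huv]

lemma matPiv_uv (A : Matrix V V (ZMod 2)) (u v : V) (hA : A.IsSymm) (hne : u ≠ v)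
    (huu : A u u = 0) (hvv : A v v = 0) (huv : A u v = 1) : matPivotEdge A u v u v = 1 := by
  have hvu : A v u = 1 := by rw [hA.apply u v]; exact huv
  rw [matPivot_eq A u v huu hvv]
  simp only [Matrix.add_apply, rk1]
  rw [cvec_self_one A u huu, cvec_self_one A v hvv, cvec_other_one A u v hne huv,
    cvec_other_one A v u hne.symm hvu, huv]
  decide

lemma cvec_matPiv_u (A : Matrix V V (ZMod 2)) (u v : V) (hA : A.IsSymm) (hne : u ≠ v)
    (huu : A u u = 0) (hvv : A v v = 0) (huv : A u v = 1) :
    cvec (matPivotEdge A u v) u = cvec A v := by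
  have h20 : (2 : ZMod 2) = 0 := rfl
  funext k
  show matPivotEdge A u v k u + (if k = u then 1 else 0) = cvec A v k
  rw [matPivot_eq A u v huu hvv]
  simp only [Matrix.add_apply, rk1]
  rw [cvec_self_one A u huu, cvec_other_one A u v hne huv, mul_one, mul_one]
  simp only [cvec]
  linear_combination (A k u + (if k = u then (1 : ZMod 2) else 0)) * h20

lemma cvec_matPiv_v (A : Matrix V V (ZMod 2)) (u v : V) (hA : A.IsSymm) (hne : u ≠ v)
    (huu : A u u = 0) (hvv : A v v = 0) (huv : A u v = 1) :
    cvec (matPivotEdge A u v) v = cvec A u := by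
  have h20 : (2 : ZMod 2) = 0 := rfl
  have hvu : A v u = 1 := by rw [hA.apply u v]; exact huv
  funext k
  show matPivotEdge A u v k v + (if k = v then 1 else 0) = cvec A u k
  rw [matPivot_eq A u v huu hvv]
  simp only [Matrix.add_apply, rk1]
  rw [cvec_self_one A v hvv, cvec_other_one A v u hne.symm hvu, mul_one, mul_one]
  simp only [cvec]
  linear_combination (A k v + (if k = v then (1 : ZMod 2) else 0)) * h20

lemma matPiv_invol (A : Matrix V V (ZMod 2)) (u v : V) (hA : A.IsSymm) (hne : u ≠ v)
    (huu : A u u = 0) (hvv : A v v = 0) (huv : A u v = 1) :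
    matPivotEdge (matPivotEdge A u v) u v = A := by
  have h20 : (2 : ZMod 2) = 0 := rfl
  rw [matPivot_eq (matPivotEdge A u v) u v (by rw [matPiv_diag]; exact huu)
      (by rw [matPiv_diag]; exact hvv),
    cvec_matPiv_u A u v hA hne huu hvv huv, cvec_matPiv_v A u v hA hne huu hvv huv,
    matPivot_eq A u v huu hvv]
  ext i j
  simp only [Matrix.add_apply, rk1]
  linear_combination (cvec A u i * cvec A v j + cvec A v i * cvec A u j) * h20

lemma step_iff {B C : Matrix V V (ZMod 2)} {s : Finset V}
    (h1 : ∀ x, C.mulVec (swv s x (B.mulVec x)) = swv s (B.mulVec x) x)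
    (h2 : ∀ x, B.mulVec (swv s x (C.mulVec x)) = swv s (C.mulVec x) x)
    (x y : V → ZMod 2) :
    B.mulVec x = y ↔ C.mulVec (swv s x y) = swv s y x := by
  constructor
  · rintro rfl; exact h1 x
  · intro h
    have h3 := h2 (swv s x y)
    rw [h, swv_invol s x y, swv_invol s y x] at h3
    exact h3

lemma lc_iff (A : Matrix V V (ZMod 2)) (u : V) (hA : A.IsSymm) (huu : A u u = 1)
    (x y : V → ZMod 2) :
    (matLC A u).mulVec x = y ↔ A.mulVec (swv {u} x y) = swv {u} y x :=
  step_iff (fun x => lc_fwd A u hA huu x)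
    (fun x => by
      have h := lc_fwd (matLC A u) u (matLC_isSymm A u hA huu)
        (by rw [matLC_diag]; exact huu) x
      rwa [matLC_invol A u hA huu] at h) x y

lemma piv_iff (A : Matrix V V (ZMod 2)) (u v : V) (hA : A.IsSymm) (hne : u ≠ v)
    (huu : A u u = 0) (hvv : A v v = 0) (huv : A u v = 1) (x y : V → ZMod 2) :
    (matPivotEdge A u v).mulVec x = y ↔ A.mulVec (swv {u,v} x y) = swv {u,v} y x :=
  step_iff (fun x => piv_fwd A u v hA hne huu hvv huv x)
    (fun x => by
      have h := piv_fwd (matPivotEdge A u v) u v (matPiv_isSymm A u v hA huu hvv) hne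
        (by rw [matPiv_diag]; exact huu) (by rw [matPiv_diag]; exact hvv)
        (matPiv_uv A u v hA hne huu hvv huv) x
      rwa [matPiv_invol A u v hA hne huu hvv huv] at h) x y

lemma swv_empty (x y : V → ZMod 2) : swv (∅ : Finset V) x y = x := by
  funext i; simp [swv]

lemma opsSupport_cons_lc (u : V) (φ : List (V ⊕ V × V)) :
    opsSupport (Sum.inl u :: φ) = symmDiff {u} (opsSupport φ) := by
  ext x
  simp only [opsSupport, Finset.mem_filter, Finset.mem_univ, true_and, Finset.mem_symmDiff,
    Finset.mem_singleton, opsVertices, List.flatMap_cons, List.count_append]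
  by_cases hx : x = u <;>
    simp [hx, List.count_cons, Nat.odd_iff, @eq_comm _ u x] <;> omega

lemma opsSupport_cons_piv (p : V × V) (hne : p.1 ≠ p.2) (φ : List (V ⊕ V × V)) :
    opsSupport (Sum.inr p :: φ) = symmDiff {p.1, p.2} (opsSupport φ) := by
  ext x
  simp only [opsSupport, Finset.mem_filter, Finset.mem_univ, true_and, Finset.mem_symmDiff,
    Finset.mem_insert, Finset.mem_singleton, opsVertices, List.flatMap_cons, List.count_append]
  by_cases h1 : x = p.1 <;> by_cases h2 : x = p.2
  · exact absurd (h1 ▸ h2 ▸ rfl : p.1 = p.2) hne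
  all_goals simp [h1, h2, hne, hne.symm, List.count_cons, Nat.odd_iff, @eq_comm _ p.1 x,
    @eq_comm _ p.2 x] <;> omega

lemma main_invariant (φ : List (V ⊕ V × V)) :
    ∀ A : Matrix V V (ZMod 2), A.IsSymm → OpsApplicable A φ →
      (applyOps A φ).IsSymm ∧
      ∀ x y, (applyOps A φ).mulVec x = y ↔
        A.mulVec (swv (opsSupport φ) x y) = swv (opsSupport φ) y x := by
  induction φ with
  | nil =>
    intro A hA _
    refine ⟨hA, fun x y => ?_⟩
    have he : opsSupport ([] : List (V ⊕ V × V)) = ∅ := by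
      ext x; simp [opsSupport, opsVertices]
    rw [he, swv_empty, swv_empty]
    exact Iff.rfl
  | cons op φ ih =>
    intro A hA happ
    match op with
    | Sum.inl u =>
      obtain ⟨huu, happ'⟩ := happ
      obtain ⟨hsym, hiff⟩ := ih (matLC A u) (matLC_isSymm A u hA huu) happ'
      refine ⟨hsym, fun x y => ?_⟩
      show (applyOps (matLC A u) φ).mulVec x = y ↔ _
      rw [hiff x y, lc_iff A u hA huu, swv_swv, swv_swv, opsSupport_cons_lc]
    | Sum.inr p =>
      obtain ⟨hne, huu, hvv, huv, happ'⟩ := happ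
      obtain ⟨hsym, hiff⟩ := ih (matPivotEdge A p.1 p.2) (matPiv_isSymm A p.1 p.2 hA huu hvv) happ'
      refine ⟨hsym, fun x y => ?_⟩
      show (applyOps (matPivotEdge A p.1 p.2) φ).mulVec x = y ↔ _
      rw [hiff x y, piv_iff A p.1 p.2 hA hne huu hvv huv, swv_swv, swv_swv,
        opsSupport_cons_piv p hne]

theorem applyOps_eq_of_support_eq (A : Matrix V V (ZMod 2)) (hA : A.IsSymm)
    (phi phi' : List (V ⊕ V × V)) (h : OpsApplicable A phi) (h' : OpsApplicable A phi')
    (hs : opsSupport phi = opsSupport phi') :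
    applyOps A phi = applyOps A phi' := by
  obtain ⟨_, h1⟩ := main_invariant phi A hA h
  obtain ⟨_, h2⟩ := main_invariant phi' A hA h'
  have hmv : ∀ x, (applyOps A phi).mulVec x = (applyOps A phi').mulVec x := by
    intro x
    have e1 := (h1 x ((applyOps A phi).mulVec x)).mp rfl
    rw [hs] at e1
    exact ((h2 x ((applyOps A phi).mulVec x)).mpr e1).symm
  ext i j
  have := hmv (Pi.single j 1)
  rw [Matrix.mulVec_single, Matrix.mulVec_single] at this
  have := congrFun this i
  simpa using this
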